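/- Let d ≥ 1, let A be a positive semidefinite d×d real matrix, and let x be distributed according to the standard Gaussian measure on ℝ^d. Then the expectation of √(xᵀ A x) is at least √(2·trace(A)/π). -/

import Mathlib

open MeasureTheory ProbabilityTheory Matrix Filter
open scoped ENNReal NNReal Real Topology

lemma lintegral_pi_prod {n : ℕ} (μ : Fin n → Measure ℝ) [∀ i, SigmaFinite (μ i)]
    (f : Fin n → ℝ → ℝ≥0∞) (hf : ∀ i, Measurable (f i)) :
    ∫⁻ x : Fin n → ℝ, ∏ i, f i (x i) ∂Measure.pi μ = ∏ i, ∫⁻ t, f i t ∂μ i := by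
  induction n with
  | zero => simp
  | succ n ih =>
    have hmp := (measurePreserving_piFinSuccAbove μ 0).symm
    have hFm : Measurable fun x : Fin (n+1) → ℝ => ∏ i, f i (x i) :=
      Finset.measurable_prod _ fun i _ => (hf i).comp (measurable_pi_apply i)
    rw [← hmp.lintegral_comp hFm]
    simp_rw [MeasurableEquiv.piFinSuccAbove_symm_apply, Fin.insertNthEquiv, Equiv.coe_fn_mk,
      Fin.insertNth_zero, Fin.prod_univ_succ, Fin.cons_zero, Fin.cons_succ, Fin.zero_succAbove,
      cast_eq]
    have hg : Measurable fun y : Fin n → ℝ => ∏ i : Fin n, f i.succ (y i) :=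
      Finset.measurable_prod _ fun i _ => (hf i.succ).comp (measurable_pi_apply i)
    rw [lintegral_prod_mul ((hf 0).aemeasurable) hg.aemeasurable]
    rw [ih (fun i => μ i.succ) (fun i => f i.succ) (fun i => hf i.succ)]

lemma gaussian_pi_eq (d : ℕ) :
    (Measure.pi fun _ : Fin d => gaussianReal 0 1)
      = (Measure.pi fun _ : Fin d => (volume : Measure ℝ)).withDensity
          (fun x => ∏ i, gaussianPDF 0 1 (x i)) := by
  refine Measure.pi_eq fun s hs => ?_
  rw [withDensity_apply _ (MeasurableSet.univ_pi hs),
    ← lintegral_indicator (MeasurableSet.univ_pi hs)]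
  have hind : (Set.univ.pi s).indicator (fun x : Fin d → ℝ => ∏ i, gaussianPDF 0 1 (x i))
      = fun x => ∏ i, (s i).indicator (gaussianPDF 0 1) (x i) := by
    ext x
    by_cases hx : x ∈ Set.univ.pi s
    · rw [Set.indicator_of_mem hx]
      exact Finset.prod_congr rfl fun i _ =>
        (Set.indicator_of_mem (hx i (Set.mem_univ i)) _).symm
    · rw [Set.indicator_of_notMem hx]
      obtain ⟨i, hi⟩ : ∃ i, x i ∉ s i := by simpa [Set.mem_pi] using hx
      exact (Finset.prod_eq_zero (Finset.mem_univ i)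
        (by simp [Set.indicator_of_notMem hi])).symm
  rw [hind, lintegral_pi_prod _ _ (fun i => (measurable_gaussianPDF 0 1).indicator (hs i))]
  refine Finset.prod_congr rfl fun i _ => ?_
  rw [lintegral_indicator (hs i), gaussianReal_of_var_ne_zero 0 one_ne_zero,
    withDensity_apply _ (hs i)]

lemma prod_gaussianPDFReal (d : ℕ) (y : Fin d → ℝ) :
    ∏ i, gaussianPDFReal 0 1 (y i)
      = ((Real.sqrt (2*Real.pi))⁻¹) ^ d * Real.exp (-(∑ i, (y i)^2)/2) := by
  simp only [gaussianPDFReal, sub_zero, NNReal.coe_one, mul_one]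
  rw [Finset.prod_mul_distrib, Finset.prod_const, ← Real.exp_sum, Finset.card_univ,
    Fintype.card_fin]
  congr 1
  simp only [neg_div, Finset.sum_neg_distrib, Finset.sum_div]

lemma gaussian_pi_map_orth (d : ℕ) (Q : Matrix (Fin d) (Fin d) ℝ) (hQ : Qᵀ * Q = 1) :
    Measure.map (fun x => Q.mulVec x) (Measure.pi fun _ : Fin d => gaussianReal 0 1)
      = Measure.pi fun _ : Fin d => gaussianReal 0 1 := by
  classical
  have hdet2 : Q.det * Q.det = 1 := by
    have := congrArg Matrix.det hQ
    rwa [Matrix.det_mul, Matrix.det_transpose, Matrix.det_one] at this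
  have hdet0 : Q.det ≠ 0 := by
    intro h; rw [h, mul_zero] at hdet2; exact zero_ne_one hdet2
  have habs : |Q.det| = 1 := by
    rcases mul_self_eq_one_iff.mp ((abs_mul_abs_self Q.det).trans hdet2) with h | h
    · exact h
    · nlinarith [abs_nonneg Q.det]
  have hQc : Continuous fun x : Fin d → ℝ => Q.mulVec x :=
    Continuous.congr (Matrix.mulVecLin Q).continuous_of_finiteDimensional
      fun x => Matrix.mulVecLin_apply ..
  have hQm : Measurable fun x : Fin d → ℝ => Q.mulVec x := hQc.measurable
  -- norm preservation
  have hnorm : ∀ x : Fin d → ℝ, ∑ i, (Q.mulVec x i)^2 = ∑ i, (x i)^2 := by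
    intro x
    have h1 : (Q.mulVec x) ⬝ᵥ (Q.mulVec x) = x ⬝ᵥ x := by
      rw [dotProduct_mulVec, ← Matrix.mulVec_transpose, Matrix.mulVec_mulVec, hQ,
        Matrix.one_mulVec]
    simpa [dotProduct, pow_two] using h1
  -- the density
  set G : (Fin d → ℝ) → ℝ≥0∞ := fun x => ∏ i, gaussianPDF 0 1 (x i) with hGdef
  have hGm : Measurable G :=
    Finset.measurable_prod _ fun i _ => (measurable_gaussianPDF 0 1).comp (measurable_pi_apply i)
  have hGQ : ∀ x, G (Q.mulVec x) = G x := by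
    intro x
    simp only [hGdef, gaussianPDF]
    rw [← ENNReal.ofReal_prod_of_nonneg (fun i _ => gaussianPDFReal_nonneg 0 1 _),
      ← ENNReal.ofReal_prod_of_nonneg (fun i _ => gaussianPDFReal_nonneg 0 1 _),
      prod_gaussianPDFReal, prod_gaussianPDFReal, hnorm]
  -- volume invariance
  have hmap : Measure.map (fun x : Fin d → ℝ => Q.mulVec x)
      (Measure.pi fun _ => (volume : Measure ℝ)) = Measure.pi fun _ => (volume : Measure ℝ) := by
    have h1 : (fun x : Fin d → ℝ => Q.mulVec x) = ⇑(Matrix.toLin' Q) := by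
      funext x; rw [Matrix.toLin'_apply]
    rw [← volume_pi, h1, Real.map_matrix_volume_pi_eq_smul_volume_pi hdet0, abs_inv, habs]
    simp
  rw [gaussian_pi_eq]
  ext s hs
  rw [Measure.map_apply hQm hs, withDensity_apply _ (hQm hs), withDensity_apply _ hs,
    ← lintegral_indicator (hQm hs), ← lintegral_indicator hs]
  have hind : ((fun x => Q.mulVec x) ⁻¹' s).indicator G
      = fun x => (s.indicator G) (Q.mulVec x) := by
    ext x
    by_cases hx : Q.mulVec x ∈ s
    · rw [Set.indicator_of_mem hx, Set.indicator_of_mem (by exact hx), hGQ]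
    · rw [Set.indicator_of_notMem hx, Set.indicator_of_notMem (by exact hx)]
  rw [hind, ← lintegral_map (hGm.indicator hs) hQm, hmap]

lemma integral_Ioi_mul_exp : ∫ x in Set.Ioi (0:ℝ), x * Real.exp (-(x^2)/2) = 1 := by
  have hderiv : ∀ x ∈ Set.Ioi (0:ℝ),
      HasDerivAt (fun y : ℝ => -Real.exp (-(y^2)/2)) (x * Real.exp (-(x^2)/2)) x := by
    intro x _
    have h2 := ((((hasDerivAt_pow 2 x).neg).div_const 2).exp).neg
    refine h2.congr_deriv ?_
    simp
    ring
  have hint : IntegrableOn (fun x : ℝ => x * Real.exp (-(x^2)/2)) (Set.Ioi 0) := by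
    have h := integrable_mul_exp_neg_mul_sq (by norm_num : (0:ℝ) < 1/2)
    refine (h.congr ?_).integrableOn
    filter_upwards with x
    congr 1
    ring_nf
  have htend : Tendsto (fun y : ℝ => -Real.exp (-(y^2)/2)) atTop (𝓝 0) := by
    rw [show (0:ℝ) = -0 by norm_num]
    refine Tendsto.neg (Real.tendsto_exp_atBot.comp ?_)
    have h1 : Tendsto (fun y : ℝ => y^2/2) atTop atTop :=
      (tendsto_pow_atTop (two_ne_zero)).atTop_div_const (by norm_num)
    simpa [neg_div] using tendsto_neg_atBot_iff.mpr h1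
  have hcont : ContinuousWithinAt (fun y : ℝ => -Real.exp (-(y^2)/2)) (Set.Ici 0) 0 :=
    (Continuous.continuousWithinAt (by continuity))
  have := integral_Ioi_of_hasDerivAt_of_tendsto hcont hderiv hint htend
  rw [this]
  norm_num

lemma sqrt_two_div_pi : (Real.sqrt (2*Real.pi))⁻¹ * 2 = Real.sqrt (2/Real.pi) := by
  have hpi := Real.pi_pos
  have h1 : Real.sqrt (2/Real.pi) * Real.sqrt (2*Real.pi) = 2 := by
    rw [← Real.sqrt_mul (by positivity)]
    rw [show 2/Real.pi * (2*Real.pi) = 2^2 by field_simp]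
    exact Real.sqrt_sq (by norm_num)
  have h2 : Real.sqrt (2*Real.pi) ≠ 0 := by positivity
  rw [inv_mul_eq_div, eq_comm, eq_div_iff h2]
  exact h1

lemma oneD_abs : ∫ t : ℝ, gaussianPDFReal 0 1 t * |t| = Real.sqrt (2/Real.pi) := by
  have hpdf : ∀ t : ℝ, gaussianPDFReal 0 1 t * |t|
      = (Real.sqrt (2*Real.pi))⁻¹ * (|t| * Real.exp (-(t^2)/2)) := by
    intro t
    simp only [gaussianPDFReal, sub_zero, NNReal.coe_one, mul_one]
    ring
  simp_rw [hpdf]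
  rw [MeasureTheory.integral_const_mul]
  have key := integral_comp_abs (f := fun s : ℝ => s * Real.exp (-(s^2)/2))
  simp only [sq_abs] at key
  rw [key, integral_Ioi_mul_exp, mul_one, sqrt_two_div_pi]

lemma np_meas (d : ℕ) :
    Measurable fun x : Fin d → ℝ => ∏ i, (gaussianPDFReal 0 1 (x i)).toNNReal :=
  Finset.measurable_prod _ fun i _ =>
    ((measurable_gaussianPDFReal 0 1).comp (measurable_pi_apply i)).real_toNNReal

lemma hGnp (d : ℕ) : (fun x : Fin d → ℝ => ∏ i, gaussianPDF 0 1 (x i))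
    = fun x => ((∏ i, (gaussianPDFReal 0 1 (x i)).toNNReal : ℝ≥0) : ℝ≥0∞) := by
  funext x
  rw [ENNReal.coe_finset_prod]
  rfl

lemma np_coe (d : ℕ) (x : Fin d → ℝ) :
    ((∏ i, (gaussianPDFReal 0 1 (x i)).toNNReal : ℝ≥0) : ℝ)
      = ∏ i, gaussianPDFReal 0 1 (x i) := by
  push_cast
  exact Finset.prod_congr rfl fun i _ => Real.coe_toNNReal _ (gaussianPDFReal_nonneg 0 1 _)

lemma prod_split (d : ℕ) (i : Fin d) (x : Fin d → ℝ) (h : Fin d → ℝ) :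
    (∏ j, gaussianPDFReal 0 1 (x j)) * h i
      = ∏ j, (gaussianPDFReal 0 1 (x j) * if j = i then h j else 1) := by
  rw [Finset.prod_mul_distrib, Finset.prod_ite_eq' Finset.univ i h]
  simp

lemma integral_abs_eval (d : ℕ) (i : Fin d) :
    ∫ x : Fin d → ℝ, |x i| ∂(Measure.pi fun _ : Fin d => gaussianReal 0 1)
      = Real.sqrt (2/Real.pi) := by
  rw [gaussian_pi_eq d, hGnp d, integral_withDensity_eq_integral_smul (np_meas d)]
  have : ∀ x : Fin d → ℝ, (∏ j, (gaussianPDFReal 0 1 (x j)).toNNReal : ℝ≥0) • |x i|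
      = ∏ j, (gaussianPDFReal 0 1 (x j) * if j = i then |x j| else 1) := by
    intro x
    rw [NNReal.smul_def, np_coe d, smul_eq_mul, prod_split d i x (fun j => |x j|)]
  simp_rw [this]
  rw [← volume_pi,
    MeasureTheory.integral_fintype_prod_volume_eq_prod
      (fun j t => gaussianPDFReal 0 1 t * if j = i then |t| else 1)]
  have heach : ∀ j, (∫ t : ℝ, gaussianPDFReal 0 1 t * if j = i then |t| else 1)
      = if j = i then Real.sqrt (2/Real.pi) else 1 := by
    intro j
    by_cases hj : j = i
    · simp only [hj, if_true]; exact oneD_abs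
    · simp only [hj, if_false, mul_one]; exact integral_gaussianPDFReal_eq_one 0 one_ne_zero
  simp_rw [heach]
  rw [Finset.prod_ite_eq' Finset.univ i (fun _ => Real.sqrt (2/Real.pi))]
  simp

lemma integrable_pdf_abs : Integrable (fun t : ℝ => gaussianPDFReal 0 1 t * |t|) := by
  have h := ((integrable_mul_exp_neg_mul_sq (by norm_num : (0:ℝ) < 1/2)).abs).const_mul
    ((Real.sqrt (2*Real.pi))⁻¹)
  refine h.congr (Filter.Eventually.of_forall fun t => ?_)
  simp only [gaussianPDFReal, sub_zero, NNReal.coe_one, mul_one, abs_mul,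
    Real.abs_exp]
  rw [show -(1/2) * t^2 = -t^2/2 by ring]
  ring

lemma continuous_dot (d : ℕ) (u : Fin d → ℝ) :
    Continuous fun x : Fin d → ℝ => u ⬝ᵥ x := by
  simp only [dotProduct]
  exact continuous_finset_sum _ fun j _ => continuous_const.mul (continuous_apply j)

lemma integrable_prod_pivot (d : ℕ) (j : Fin d) :
    Integrable (fun x : Fin d → ℝ =>
        ∏ k, (gaussianPDFReal 0 1 (x k) * if k = j then |x k| else 1))
      (Measure.pi fun _ : Fin d => (volume : Measure ℝ)) := by
  rw [← volume_pi]
  refine Integrable.fintype_prod (f := fun k t => gaussianPDFReal 0 1 t * if k = j then |t| else 1)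
    fun k => ?_
  by_cases hk : k = j
  · simp only [hk, if_true]; exact integrable_pdf_abs
  · simp only [hk, if_false, mul_one]; exact integrable_gaussianPDFReal 0 1

lemma integrable_abs_dot (d : ℕ) (u : Fin d → ℝ) :
    Integrable (fun x : Fin d → ℝ => |u ⬝ᵥ x|)
      (Measure.pi fun _ : Fin d => gaussianReal 0 1) := by
  rw [gaussian_pi_eq d, hGnp d, integrable_withDensity_iff_integrable_smul (np_meas d)]
  have hgint : Integrable (fun x : Fin d → ℝ =>
      ∑ j, |u j| * ∏ k, (gaussianPDFReal 0 1 (x k) * if k = j then |x k| else 1))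
      (Measure.pi fun _ : Fin d => (volume : Measure ℝ)) :=
    integrable_finset_sum _ fun j _ => (integrable_prod_pivot d j).const_mul _
  refine hgint.mono' ?_ (Filter.Eventually.of_forall fun x => ?_)
  · refine AEStronglyMeasurable.smul ((np_meas d).coe_nnreal_real.aestronglyMeasurable) ?_
    exact ((continuous_dot d u).abs).aestronglyMeasurable
  · have hnn : (0:ℝ) ≤ ((∏ i, (gaussianPDFReal 0 1 (x i)).toNNReal : ℝ≥0) : ℝ) :=
      NNReal.coe_nonneg _
    rw [NNReal.smul_def, smul_eq_mul, Real.norm_eq_abs, abs_mul, abs_of_nonneg hnn,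
      abs_abs, np_coe d]
    have h1 : |u ⬝ᵥ x| ≤ ∑ j, |u j| * |x j| := by
      refine (Finset.abs_sum_le_sum_abs _ _).trans ?_
      refine le_of_eq (Finset.sum_congr rfl fun j _ => abs_mul _ _)
    calc (∏ i, gaussianPDFReal 0 1 (x i)) * |u ⬝ᵥ x|
        ≤ (∏ i, gaussianPDFReal 0 1 (x i)) * ∑ j, |u j| * |x j| := by
          refine mul_le_mul_of_nonneg_left h1 ?_
          exact Finset.prod_nonneg fun i _ => gaussianPDFReal_nonneg 0 1 _
      _ = ∑ j, |u j| * ((∏ i, gaussianPDFReal 0 1 (x i)) * |x j|) := by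
          rw [Finset.mul_sum]; exact Finset.sum_congr rfl fun j _ => by ring
      _ = ∑ j, |u j| * ∏ k, (gaussianPDFReal 0 1 (x k) * if k = j then |x k| else 1) := by
          exact Finset.sum_congr rfl fun j _ => by rw [prod_split d j x (fun k => |x k|)]

lemma integral_abs_dot_eq (d : ℕ) (u : Fin d → ℝ) :
    ∫ x : Fin d → ℝ, |u ⬝ᵥ x| ∂(Measure.pi fun _ : Fin d => gaussianReal 0 1)
      = Real.sqrt (2/Real.pi) * Real.sqrt (∑ j, (u j)^2) := by
  classical
  by_cases hu : u = 0
  · subst hu; simp [zero_dotProduct]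
  have hd0 : 0 < d := by
    rcases Nat.eq_zero_or_pos d with h | h
    · exact absurd (by subst h; funext i; exact i.elim0) hu
    · exact h
  haveI : NeZero d := ⟨hd0.ne'⟩
  set r := Real.sqrt (∑ j, (u j)^2) with hrdef
  obtain ⟨j₀, hj₀⟩ : ∃ j, u j ≠ 0 := by
    by_contra h
    push_neg at h
    exact hu (funext h)
  have hsum : 0 < ∑ j, (u j)^2 :=
    Finset.sum_pos' (fun i _ => sq_nonneg _) ⟨j₀, Finset.mem_univ _, by positivity⟩
  have hr : 0 < r := Real.sqrt_pos.mpr hsum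
  set w : EuclideanSpace ℝ (Fin d) := WithLp.toLp 2 (fun j => u j / r) with hwdef
  have hww : ∑ j, w j * w j = 1 := by
    have : ∀ j, w j * w j = (u j)^2 / (∑ j, (u j)^2) := by
      intro j
      rw [hwdef]
      simp only
      rw [div_mul_div_comm, hrdef, Real.mul_self_sqrt hsum.le, pow_two]
    rw [Finset.sum_congr rfl fun j _ => this j, ← Finset.sum_div, div_self hsum.ne']
  have horth : Orthonormal ℝ (({0} : Set (Fin d)).restrict fun _ : Fin d => w) := by
    rw [orthonormal_iff_ite]
    rintro ⟨i, hi⟩ ⟨j, hj⟩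
    have hij : i = j := by
      simp only [Set.mem_singleton_iff] at hi hj; rw [hi, hj]
    subst hij
    rw [if_pos (Subtype.ext rfl), PiLp.inner_apply]
    simp [RCLike.inner_apply, starRingEnd_apply, pow_two]; exact hww
  obtain ⟨b, hb⟩ := Orthonormal.exists_orthonormalBasis_extension_of_card_eq
    (𝕜 := ℝ) (by simp) horth
  have hb0 : b 0 = w := hb 0 rfl
  set Q : Matrix (Fin d) (Fin d) ℝ := Matrix.of fun i j => b i j with hQdef
  have hinner : ∀ i k, ∑ j, b i j * b k j = if i = k then (1:ℝ) else 0 := by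
    intro i k
    have h := (orthonormal_iff_ite.mp b.orthonormal) i k
    rw [PiLp.inner_apply] at h
    simpa [RCLike.inner_apply, starRingEnd_apply, mul_comm] using h
  have hQQt : Q * Qᵀ = 1 := by
    ext i k
    simp only [Matrix.mul_apply, Matrix.transpose_apply, hQdef, Matrix.of_apply,
      Matrix.one_apply]
    exact hinner i k
  have hQtQ : Qᵀ * Q = 1 := mul_eq_one_comm.mp hQQt
  have hmapinv : Measure.map (fun x => Qᵀ.mulVec x)
      (Measure.pi fun _ : Fin d => gaussianReal 0 1)
      = Measure.pi fun _ : Fin d => gaussianReal 0 1 :=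
    gaussian_pi_map_orth d Qᵀ (by rwa [transpose_transpose])
  have hu_eq : ∀ j, u j = r * b 0 j := by
    intro j
    rw [hb0, hwdef]
    simp only
    field_simp
  have hQu : Q.mulVec u = fun i => if i = 0 then r else 0 := by
    funext i
    simp only [Matrix.mulVec, dotProduct, hQdef, Matrix.of_apply]
    calc ∑ j, b i j * u j = r * ∑ j, b i j * b 0 j := by
          rw [Finset.mul_sum]
          exact Finset.sum_congr rfl fun j _ => by rw [hu_eq j]; ring
      _ = if i = 0 then r else 0 := by rw [hinner i 0]; split <;> simp
  have hpoint : ∀ x : Fin d → ℝ, |u ⬝ᵥ (Qᵀ.mulVec x)| = r * |x 0| := by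
    intro x
    have h1 : u ⬝ᵥ (Qᵀ.mulVec x) = (Q.mulVec u) ⬝ᵥ x := by
      rw [Matrix.mulVec_transpose, dotProduct_comm, ← Matrix.dotProduct_mulVec,
        dotProduct_comm]
    rw [h1, hQu]
    have h2 : (fun i => if i = 0 then r else 0) ⬝ᵥ x = r * x 0 := by
      simp [dotProduct, ite_mul]
    rw [h2, abs_mul, abs_of_pos hr]
  have hQtc : Continuous fun x : Fin d → ℝ => Qᵀ.mulVec x :=
    Continuous.congr (Matrix.mulVecLin Qᵀ).continuous_of_finiteDimensional
      fun x => Matrix.mulVecLin_apply ..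
  calc ∫ x : Fin d → ℝ, |u ⬝ᵥ x| ∂(Measure.pi fun _ : Fin d => gaussianReal 0 1)
      = ∫ x : Fin d → ℝ, |u ⬝ᵥ x|
          ∂(Measure.map (fun x => Qᵀ.mulVec x)
            (Measure.pi fun _ : Fin d => gaussianReal 0 1)) := by rw [hmapinv]
    _ = ∫ x : Fin d → ℝ, |u ⬝ᵥ (Qᵀ.mulVec x)|
          ∂(Measure.pi fun _ : Fin d => gaussianReal 0 1) := by
        rw [integral_map hQtc.measurable.aemeasurable
          ((continuous_dot d u).abs).aestronglyMeasurable]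
    _ = ∫ x : Fin d → ℝ, r * |x 0| ∂(Measure.pi fun _ : Fin d => gaussianReal 0 1) := by
        simp_rw [hpoint]
    _ = r * Real.sqrt (2/Real.pi) := by
        rw [MeasureTheory.integral_const_mul, integral_abs_eval d 0]
    _ = Real.sqrt (2/Real.pi) * r := mul_comm _ _

/-- For a positive semidefinite matrix `A` and `x` drawn from the standard Gaussian
measure on `ℝ^d`, the expectation of `√(xᵀ A x)` is at least `√(2 trace A / π)`. -/
theorem gaussian_quadratic_form_expectation_lower (d : ℕ) (hd : 1 ≤ d)
    (A : Matrix (Fin d) (Fin d) ℝ) (hA : A.PosSemidef) :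
    Real.sqrt (2 * A.trace / Real.pi) ≤
      ∫ x : Fin d → ℝ, Real.sqrt (x ⬝ᵥ A.mulVec x)
        ∂(Measure.pi fun _ : Fin d => gaussianReal 0 1) := by
  classical
  obtain ⟨B, hBB, hBh⟩ : ∃ B : Matrix (Fin d) (Fin d) ℝ, B * B = A ∧ B.IsHermitian := by
    open scoped MatrixOrder in
    exact ⟨CFC.sqrt A, CFC.sqrt_mul_sqrt_self A hA.nonneg, (CFC.sqrt_nonneg A).posSemidef.isHermitian⟩
  have hBt : Bᵀ = B := by
    have hherm := hBh
    ext i j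
    have := congrFun (congrFun hherm i) j
    simpa [Matrix.conjTranspose_apply] using this
  have hquad : ∀ x : Fin d → ℝ, x ⬝ᵥ A.mulVec x = ∑ i, ((B i) ⬝ᵥ x)^2 := by
    intro x
    rw [← hBB, ← Matrix.mulVec_mulVec, Matrix.dotProduct_mulVec]
    have hvm : x ᵥ* B = B.mulVec x := by
      conv_lhs => rw [← hBt]
      rw [Matrix.vecMul_transpose]
    rw [hvm]
    simp only [dotProduct, Matrix.mulVec, pow_two]
  have hAdiag : ∀ i, A i i = ∑ j, (B i j)^2 := by
    intro i
    rw [← hBB, Matrix.mul_apply]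
    refine Finset.sum_congr rfl fun j _ => ?_
    have h2 := congrFun (congrFun hBt i) j
    rw [Matrix.transpose_apply] at h2
    rw [h2, pow_two]
  have hAii : ∀ i, 0 ≤ A i i := fun i =>
    (hAdiag i) ▸ Finset.sum_nonneg fun j _ => sq_nonneg _
  have htr_eq : A.trace = ∑ i, A i i := by simp [Matrix.trace, Matrix.diag]
  have htr_nonneg : 0 ≤ A.trace := htr_eq ▸ Finset.sum_nonneg fun i _ => hAii i
  by_cases htr0 : A.trace = 0
  · rw [htr0]
    simpa using integral_nonneg fun x : Fin d → ℝ => Real.sqrt_nonneg (x ⬝ᵥ A.mulVec x)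
  have htrpos : 0 < A.trace := lt_of_le_of_ne htr_nonneg (Ne.symm htr0)
  set c : Fin d → ℝ := fun i => Real.sqrt (A i i) / Real.sqrt A.trace with hcdef
  have hc_nonneg : ∀ i, 0 ≤ c i := fun i => by positivity
  have hc2 : ∑ i, (c i)^2 = 1 := by
    have : ∀ i, (c i)^2 = A i i / A.trace := by
      intro i
      rw [hcdef]
      simp only
      rw [div_pow, Real.sq_sqrt (hAii i), Real.sq_sqrt htr_nonneg]
    rw [Finset.sum_congr rfl fun i _ => this i, ← Finset.sum_div, ← htr_eq,
      div_self htr0]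
  set φ : (Fin d → ℝ) → ℝ := fun x => ∑ i, c i * |(B i) ⬝ᵥ x| with hφdef
  have hφint : Integrable φ (Measure.pi fun _ : Fin d => gaussianReal 0 1) :=
    integrable_finset_sum _ fun i _ => (integrable_abs_dot d (B i)).const_mul _
  have hCS : ∀ x : Fin d → ℝ, φ x ≤ Real.sqrt (x ⬝ᵥ A.mulVec x) := by
    intro x
    rw [hquad]
    refine Real.le_sqrt_of_sq_le ?_
    calc (φ x)^2 ≤ (∑ i, (c i)^2) * ∑ i, |(B i) ⬝ᵥ x|^2 :=
          Finset.sum_mul_sq_le_sq_mul_sq _ _ _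
      _ = ∑ i, ((B i) ⬝ᵥ x)^2 := by rw [hc2, one_mul]; simp [sq_abs]
  have hsum_int : Integrable (fun x : Fin d → ℝ => ∑ i, |(B i) ⬝ᵥ x|)
      (Measure.pi fun _ : Fin d => gaussianReal 0 1) :=
    integrable_finset_sum _ fun i _ => integrable_abs_dot d (B i)
  have hqc : Continuous fun x : Fin d → ℝ => x ⬝ᵥ A.mulVec x := by
    have h1 : Continuous fun x : Fin d → ℝ => ∑ i, ((B i) ⬝ᵥ x)^2 :=
      continuous_finset_sum _ fun i _ => (continuous_dot d (B i)).pow 2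
    exact Continuous.congr h1 fun x => (hquad x).symm
  have hint : Integrable (fun x : Fin d → ℝ => Real.sqrt (x ⬝ᵥ A.mulVec x))
      (Measure.pi fun _ : Fin d => gaussianReal 0 1) := by
    refine hsum_int.mono' (Real.continuous_sqrt.comp hqc).aestronglyMeasurable
      (Filter.Eventually.of_forall fun x => ?_)
    rw [Real.norm_eq_abs, abs_of_nonneg (Real.sqrt_nonneg _), hquad]
    have h1 : ∑ i, ((B i) ⬝ᵥ x)^2 ≤ (∑ i, |(B i) ⬝ᵥ x|)^2 := by
      rw [show ∀ (f : Fin d → ℝ), ∑ i, (f i)^2 = ∑ i, |f i|^2 from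
        fun f => Finset.sum_congr rfl fun i _ => (sq_abs _).symm]
      exact Finset.sum_sq_le_sq_sum_of_nonneg fun i _ => abs_nonneg _
    calc Real.sqrt (∑ i, ((B i) ⬝ᵥ x)^2) ≤ Real.sqrt ((∑ i, |(B i) ⬝ᵥ x|)^2) :=
          Real.sqrt_le_sqrt h1
      _ = ∑ i, |(B i) ⬝ᵥ x| :=
          Real.sqrt_sq (Finset.sum_nonneg fun i _ => abs_nonneg _)
  have hφval : ∫ x : Fin d → ℝ, φ x ∂(Measure.pi fun _ : Fin d => gaussianReal 0 1)
      = Real.sqrt (2 * A.trace / Real.pi) := by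
    rw [hφdef]
    rw [integral_finset_sum _ fun i _ => (integrable_abs_dot d (B i)).const_mul _]
    have heach : ∀ i, ∫ x : Fin d → ℝ, c i * |(B i) ⬝ᵥ x|
        ∂(Measure.pi fun _ : Fin d => gaussianReal 0 1)
        = Real.sqrt (2/Real.pi) / Real.sqrt A.trace * A i i := by
      intro i
      rw [MeasureTheory.integral_const_mul, integral_abs_dot_eq d (B i)]
      rw [show ∑ j, (B i j)^2 = A i i from (hAdiag i).symm, hcdef]
      simp only
      rw [div_mul_eq_mul_div, mul_comm (Real.sqrt (A i i)), mul_assoc,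
        Real.mul_self_sqrt (hAii i)]
      ring
    rw [Finset.sum_congr rfl fun i _ => heach i, ← Finset.mul_sum, ← htr_eq,
      div_mul_eq_mul_div, mul_div_assoc, Real.div_sqrt,
      ← Real.sqrt_mul (by positivity : (0:ℝ) ≤ 2/Real.pi)]
    congr 1
    ring
  calc Real.sqrt (2 * A.trace / Real.pi)
      = ∫ x : Fin d → ℝ, φ x ∂(Measure.pi fun _ : Fin d => gaussianReal 0 1) := hφval.symm
    _ ≤ ∫ x : Fin d → ℝ, Real.sqrt (x ⬝ᵥ A.mulVec x)
          ∂(Measure.pi fun _ : Fin d => gaussianReal 0 1) :=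
        integral_mono hφint hint hCS
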